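/- If β is a Pisot number, then the (−β)-shift S_{−β} is a sofic system, i.e. the language of finite factors of elements of S_{−β} is regular. -/

import Mathlib

/-- The (-β)-transformation `T_{-β}(x) = -βx - ⌊-βx + β/(β+1)⌋`. -/
noncomputable def negBetaT (β : ℝ) (x : ℝ) : ℝ :=
  -β * x - ⌊-β * x + β / (β + 1)⌋

/-- The digits of the (-β)-expansion: `negBetaDigit β x n` is the digit
`x_{n+1} = ⌊-β T_{-β}^n(x) + β/(β+1)⌋`. -/
noncomputable def negBetaDigit (β : ℝ) (x : ℝ) (n : ℕ) : ℤ :=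
  ⌊-β * (negBetaT β)^[n] x + β / (β + 1)⌋

/-- The word `d = d_{-β}(-β/(β+1))`. -/
noncomputable def dmb (β : ℝ) : ℕ → ℤ := negBetaDigit β (-β / (β + 1))

/-- Strict alternate order on one-sided infinite words (index `k` holds the letter at
position `k+1`, whence the sign `(-1)^(k+1)`). -/
def AltLt (u v : ℕ → ℤ) : Prop :=
  ∃ k : ℕ, (∀ i < k, u i = v i) ∧ (-1 : ℤ) ^ (k + 1) * (u k - v k) < 0

/-- Non-strict alternate order. -/
def AltLe (u v : ℕ → ℤ) : Prop := u = v ∨ AltLt u v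

/-- The one-sided word read in the bi-infinite word `w` from position `n` on. -/
def shiftSeq (w : ℤ → ℤ) (n : ℤ) : ℕ → ℤ := fun i => w (n + i)

open scoped Classical

/-- The word `d* = d*_{-β}(1/(β+1))`: if `d = (d_1 ⋯ d_{2p+1})^ω` is purely periodic with
(minimal) odd period `2p+1`, then `d* = (0 d_1 ⋯ d_{2p} (d_{2p+1}-1))^ω`; otherwise
`d* = 0d`. -/
noncomputable def dstar (β : ℝ) : ℕ → ℤ :=
  if h : ∃ p : ℕ, 0 < p ∧ Odd p ∧ ∀ i, dmb β (i + p) = dmb β i then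
    fun n =>
      let p := Nat.find h
      let r := n % (p + 1)
      if r = 0 then 0 else if r = p then dmb β (p - 1) - 1 else dmb β (r - 1)
  else fun n => if n = 0 then 0 else dmb β (n - 1)

/-- The (-β)-shift: all bi-infinite words over `A_{-β} = {0,…,⌊β⌋}` all of whose shifts
lie alternately between `d` and `d*`. -/
def negBetaShift (β : ℝ) : Set (ℤ → ℤ) :=
  {w | (∀ i, 0 ≤ w i ∧ w i ≤ ⌊β⌋) ∧
    ∀ n : ℤ, AltLe (dmb β) (shiftSeq w n) ∧ AltLe (shiftSeq w n) (dstar β)}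

/-- `u` is a factor of the bi-infinite word `w`. -/
def IsFactorOf (u : List ℤ) (w : ℤ → ℤ) : Prop :=
  ∃ n : ℤ, ∀ i : ℕ, i < u.length → u.getD i 0 = w (n + i)

/-- The language of finite factors of a set of bi-infinite words. -/
def factorLang (S : Set (ℤ → ℤ)) : Language ℤ :=
  {u | ∃ w ∈ S, IsFactorOf u w}

/-- A Pisot number: an algebraic integer `β > 1` all of whose other complex conjugates
have modulus strictly less than `1`. -/
def IsPisot (β : ℝ) : Prop :=
  1 < β ∧ IsIntegral ℤ β ∧
    ∀ z : ℂ, Polynomial.aeval z (minpoly ℤ β) = 0 → z ≠ (β : ℂ) → ‖z‖ < 1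

abbrev NBSPat := (ℕ → ℤ) × ℤ

def nbsTail (f : ℕ → ℤ) (j : ℕ) : ℕ → ℤ := fun i => f (i + j)

def nbsApp (u : List ℤ) (s : ℕ → ℤ) : ℕ → ℤ :=
  fun i => if i < u.length then u.getD i 0 else s (i - u.length)

def CondP (P : NBSPat) (s : ℕ → ℤ) : Prop :=
  P.1 = s ∨ ∃ k, (∀ i < k, P.1 i = s i) ∧ P.2 * ((-1 : ℤ) ^ (k + 1) * (P.1 k - s k)) < 0

def goodAt (P : NBSPat) (u : List ℤ) : Prop :=
  ∃ k, k < u.length ∧ (∀ i < k, P.1 i = u.getD i 0) ∧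
    P.2 * ((-1 : ℤ) ^ (k + 1) * (P.1 k - u.getD k 0)) < 0

def tightF (P : NBSPat) (u : List ℤ) : Prop := ∀ i < u.length, P.1 i = u.getD i 0

def resP (P : NBSPat) (u : List ℤ) : NBSPat :=
  (nbsTail P.1 u.length, P.2 * (-1 : ℤ) ^ u.length)

lemma nbsTail_zero (f : ℕ → ℤ) : nbsTail f 0 = f := funext fun i => by simp [nbsTail]

lemma nbsApp_lt (u : List ℤ) (s : ℕ → ℤ) {i : ℕ} (h : i < u.length) :
    nbsApp u s i = u.getD i 0 := if_pos h

lemma nbsApp_ge (u : List ℤ) (s : ℕ → ℤ) {i : ℕ} (h : ¬ i < u.length) :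
    nbsApp u s i = s (i - u.length) := if_neg h

lemma nbsApp_add (u : List ℤ) (s : ℕ → ℤ) (i : ℕ) :
    nbsApp u s (i + u.length) = s i := by
  rw [nbsApp_ge u s (by omega)]; congr 1; omega

lemma not_goodAt_of_tightF {P : NBSPat} {u : List ℤ} (ht : tightF P u) (hg : goodAt P u) :
    False := by
  obtain ⟨k, hk, -, hlt⟩ := hg
  rw [ht k hk] at hlt
  simp at hlt

/-- Key decomposition lemma for `CondP` along a finite prefix. -/
lemma condP_nbsApp (P : NBSPat) (u : List ℤ) (s : ℕ → ℤ) :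
    CondP P (nbsApp u s) ↔ goodAt P u ∨ (tightF P u ∧ CondP (resP P u) s) := by
  obtain ⟨τ, ε⟩ := P
  set L := u.length with hL
  constructor
  · rintro (heq | ⟨k, hag, hlt⟩)
    · replace heq : τ = nbsApp u s := heq
      refine Or.inr ⟨fun i hi => ?_, Or.inl ?_⟩
      · rw [heq]; exact nbsApp_lt u s hi
      · funext i
        have h1 : τ (i + L) = nbsApp u s (i + L) := by rw [heq]
        rw [nbsApp_add] at h1
        simpa [resP, nbsTail] using h1
    · by_cases hk : k < L
      · refine Or.inl ⟨k, hk, fun i hi => ?_, ?_⟩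
        · rw [hag i hi, nbsApp_lt u s (hi.trans hk)]
        · rwa [nbsApp_lt u s hk] at hlt
      · push_neg at hk
        refine Or.inr ⟨fun i hi => ?_, Or.inr ⟨k - L, fun i hi => ?_, ?_⟩⟩
        · rw [hag i (lt_of_lt_of_le hi hk), nbsApp_lt u s hi]
        · have h2 := hag (i + L) (by omega)
          rw [nbsApp_add] at h2
          simpa [resP, nbsTail] using h2
        · have hsk : nbsApp u s k = s (k - L) := by
            rw [nbsApp_ge u s (by omega)]
          rw [hsk] at hlt
          have harr : (τ, ε).2 * (-1 : ℤ) ^ L *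
              ((-1 : ℤ) ^ (k - L + 1) * ((nbsTail τ L) (k - L) - s (k - L)))
              = ε * ((-1 : ℤ) ^ (k + 1) * (τ k - s (k - L))) := by
            have h3 : (k - L) + L = k := by omega
            simp only [nbsTail, h3]
            rw [show ε * (-1 : ℤ) ^ L * ((-1 : ℤ) ^ (k - L + 1) * (τ k - s (k - L)))
                = ε * (((-1 : ℤ) ^ L * (-1 : ℤ) ^ (k - L + 1)) * (τ k - s (k - L))) from by ring,
              ← pow_add, show L + (k - L + 1) = k + 1 from by omega]
          simp only [resP]
          rw [harr]
          exact hlt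
  · rintro (⟨k, hk, hag, hlt⟩ | ⟨ht, (heq | ⟨k, hag, hlt⟩)⟩)
    · refine Or.inr ⟨k, fun i hi => ?_, ?_⟩
      · rw [hag i hi, nbsApp_lt u s (hi.trans hk)]
      · rwa [nbsApp_lt u s hk]
    · replace heq : nbsTail τ L = s := heq
      refine Or.inl (funext fun i => ?_)
      show τ i = nbsApp u s i
      by_cases hi : i < L
      · rw [nbsApp_lt u s hi]; exact ht i hi
      · rw [nbsApp_ge u s hi]
        have h4 : τ i = nbsTail τ L (i - L) := by
          simp only [nbsTail]; congr 1; omega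
        rw [h4]
        exact congrFun heq (i - L)
    · simp only [resP] at hag hlt
      refine Or.inr ⟨k + L, fun i hi => ?_, ?_⟩
      · show τ i = nbsApp u s i
        by_cases hiL : i < L
        · rw [nbsApp_lt u s hiL]; exact ht i hiL
        · rw [nbsApp_ge u s hiL]
          have h5 : τ i = nbsTail τ L (i - L) := by
            simp only [nbsTail]; congr 1; omega
          rw [h5]
          exact hag (i - L) (by omega)
      · rw [nbsApp_add]
        have harr : ε * ((-1 : ℤ) ^ (k + L + 1) * (τ (k + L) - s k))
            = (τ, ε).2 * (-1 : ℤ) ^ L * ((-1 : ℤ) ^ (k + 1) * ((nbsTail τ L) k - s k)) := by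
          simp only [nbsTail]
          rw [show ε * (-1 : ℤ) ^ L * ((-1 : ℤ) ^ (k + 1) * (τ (k + L) - s k))
              = ε * (((-1 : ℤ) ^ L * (-1 : ℤ) ^ (k + 1)) * (τ (k + L) - s k)) from by ring,
            ← pow_add, show L + (k + 1) = k + L + 1 from by omega]
        rw [harr]
        simpa [resP] using hlt

lemma condP_one_iff (τ s : ℕ → ℤ) : CondP (τ, 1) s ↔ AltLe τ s := by
  simp [CondP, AltLe, AltLt]

lemma condP_neg_iff (τ s : ℕ → ℤ) : CondP (τ, -1) s ↔ AltLe s τ := by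
  constructor
  · rintro (heq | ⟨k, hag, hlt⟩)
    · exact Or.inl heq.symm
    · simp only at hlt
      refine Or.inr ⟨k, fun i hi => (hag i hi).symm, ?_⟩
      nlinarith [hlt]
  · rintro (heq | ⟨k, hag, hlt⟩)
    · exact Or.inl heq.symm
    · refine Or.inr ⟨k, fun i hi => (hag i hi).symm, ?_⟩
      show (-1:ℤ) * ((-1 : ℤ) ^ (k + 1) * (τ k - s k)) < 0
      nlinarith [hlt]

lemma nbsApp_nil (s : ℕ → ℤ) : nbsApp [] s = s := funext fun i => by simp [nbsApp]

lemma shiftSeq_add (w : ℤ → ℤ) (a : ℤ) (k : ℕ) :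
    shiftSeq w (a + k) = nbsTail (shiftSeq w a) k := by
  funext i; simp only [shiftSeq, nbsTail]; congr 1; push_cast; ring

lemma shiftSeq_eq_app (w : ℤ → ℤ) (n : ℤ) (u : List ℤ)
    (hfac : ∀ i < u.length, u.getD i 0 = w (n + i)) {j : ℕ} (hj : j ≤ u.length) :
    shiftSeq w (n + j) = nbsApp (u.drop j) (fun i => w (n + u.length + i)) := by
  funext i
  by_cases h : j + i < u.length
  · rw [nbsApp_lt _ _ (by rw [List.length_drop]; omega)]
    have hg : (u.drop j).getD i 0 = u.getD (j + i) 0 := by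
      simp [List.getD_eq_getElem?_getD, List.getElem?_drop]
    rw [hg, hfac (j + i) h]
    simp only [shiftSeq]; congr 1; push_cast; ring
  · rw [nbsApp_ge _ _ (by rw [List.length_drop]; omega)]
    simp only [shiftSeq, List.length_drop]
    congr 1
    omega

lemma shiftSeq_eq_app_len (w : ℤ → ℤ) (n : ℤ) (u : List ℤ)
    (hfac : ∀ i < u.length, u.getD i 0 = w (n + i)) :
    shiftSeq w (n + u.length) = fun i : ℕ => w (n + u.length + i) := by
  rw [shiftSeq_eq_app w n u hfac (le_refl u.length), List.drop_length, nbsApp_nil]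

def winList (w : ℤ → ℤ) (m n : ℤ) : List ℤ :=
  (List.range (n - m).toNat).map fun i : ℕ => w (m + (i : ℤ))

lemma winList_length (w : ℤ → ℤ) (m n : ℤ) : (winList w m n).length = (n - m).toNat := by
  rw [winList, List.length_map, List.length_range]

lemma winList_getD (w : ℤ → ℤ) (m n : ℤ) {i : ℕ} (h : i < (n - m).toNat) :
    (winList w m n).getD i 0 = w (m + i) := by
  unfold winList
  rw [List.getD_eq_getElem?_getD, List.getElem?_map, List.getElem?_range h]
  rfl

lemma shiftSeq_eq_app_neg (w : ℤ → ℤ) (n : ℤ) (u : List ℤ)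
    (hfac : ∀ i < u.length, u.getD i 0 = w (n + i)) {m : ℤ} (hm : m < n) :
    shiftSeq w m = nbsApp (winList w m n)
      (nbsApp u (fun i => w (n + u.length + i))) := by
  have hN : (((n - m).toNat : ℤ)) = n - m := Int.toNat_of_nonneg (by omega)
  funext i
  by_cases h : i < (n - m).toNat
  · rw [nbsApp_lt _ _ (by rw [winList_length]; exact h), winList_getD w m n h]
    rfl
  · rw [nbsApp_ge _ _ (by rw [winList_length]; exact h), winList_length]
    have h0 := congrFun (shiftSeq_eq_app w n u hfac (Nat.zero_le u.length))
        (i - (n - m).toNat)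
    simp only [shiftSeq, List.drop_zero, Nat.cast_zero, add_zero] at h0
    rw [← h0]
    simp only [shiftSeq]
    congr 1
    omega

def nbsGlue (wl : ℤ → ℤ) (n : ℤ) (u : List ℤ) (y : ℕ → ℤ) : ℤ → ℤ := fun m =>
  if m < n then wl m
  else if (m - n).toNat < u.length then u.getD (m - n).toNat 0
  else y ((m - n).toNat - u.length)

lemma nbsGlue_lt (wl : ℤ → ℤ) (n : ℤ) (u : List ℤ) (y : ℕ → ℤ) {m : ℤ} (h : m < n) :
    nbsGlue wl n u y m = wl m := if_pos h

lemma nbsGlue_mid (wl : ℤ → ℤ) (n : ℤ) (u : List ℤ) (y : ℕ → ℤ) {i : ℕ} (h : i < u.length) :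
    nbsGlue wl n u y (n + i) = u.getD i 0 := by
  have h1 : ¬ (n + (i : ℤ) < n) := by omega
  have h2 : ((n + (i : ℤ)) - n).toNat = i := by omega
  simp [nbsGlue, h1, h2, h]

lemma nbsGlue_y (wl : ℤ → ℤ) (n : ℤ) (u : List ℤ) (y : ℕ → ℤ) (i : ℕ) :
    nbsGlue wl n u y (n + u.length + i) = y i := by
  have h1 : ¬ (n + (u.length : ℤ) + i < n) := by omega
  have h2 : ((n + (u.length : ℤ) + i) - n).toNat = u.length + i := by omega
  have h3 : ¬ (u.length + i < u.length) := by omega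
  simp [nbsGlue, h1, h2, h3]

def patSet (β : ℝ) : Set NBSPat :=
  {p | (∃ j, p.1 = nbsTail (dmb β) j ∨ p.1 = nbsTail (dstar β) j) ∧ (p.2 = 1 ∨ p.2 = -1)}

lemma nbsTail_tail (f : ℕ → ℤ) (j L : ℕ) : nbsTail (nbsTail f j) L = nbsTail f (j + L) := by
  funext i; simp only [nbsTail]; congr 1; omega

lemma resP_mem_patSet {β : ℝ} {p : NBSPat} (hp : p ∈ patSet β) (u : List ℤ) :
    resP p u ∈ patSet β := by
  obtain ⟨⟨j, hj⟩, hε⟩ := hp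
  constructor
  · refine ⟨j + u.length, ?_⟩
    rcases hj with h | h
    · exact Or.inl (by rw [show (resP p u).1 = nbsTail p.1 u.length from rfl, h, nbsTail_tail])
    · exact Or.inr (by rw [show (resP p u).1 = nbsTail p.1 u.length from rfl, h, nbsTail_tail])
  · have hpow : (-1 : ℤ) ^ u.length = 1 ∨ (-1 : ℤ) ^ u.length = -1 := by
      rcases Nat.even_or_odd u.length with h | h
      · exact Or.inl h.neg_one_pow
      · exact Or.inr h.neg_one_pow
    show p.2 * (-1 : ℤ) ^ u.length = 1 ∨ p.2 * (-1 : ℤ) ^ u.length = -1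
    rcases hε with h1 | h1 <;> rcases hpow with h2 | h2 <;> rw [h1, h2] <;> norm_num

lemma pd_mem (β : ℝ) : ((dmb β, 1) : NBSPat) ∈ patSet β :=
  ⟨⟨0, Or.inl (nbsTail_zero _).symm⟩, Or.inl rfl⟩

lemma pds_mem (β : ℝ) : ((dstar β, -1) : NBSPat) ∈ patSet β :=
  ⟨⟨0, Or.inr (nbsTail_zero _).symm⟩, Or.inr rfl⟩

def Flagd (β : ℝ) (u : List ℤ) : Prop := ∀ i < u.length, 0 ≤ u.getD i 0 ∧ u.getD i 0 ≤ ⌊β⌋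

def AliveI (P : NBSPat) (u : List ℤ) : Prop :=
  ∀ j < u.length, goodAt P (u.drop j) ∨ tightF P (u.drop j)

def TRes (P : NBSPat) (u : List ℤ) : Set NBSPat :=
  {q | ∃ j, j < u.length ∧ tightF P (u.drop j) ∧ q = resP P (u.drop j)}

noncomputable def stFun (β : ℝ) (u : List ℤ) :
    ((patSet β) → Prop × Prop × NBSPat) × (Prop × Prop) × (Set NBSPat × Set NBSPat) × Prop :=
  (fun P => (goodAt P.1 u, tightF P.1 u, resP P.1 u),
   (AliveI (dmb β, 1) u, AliveI (dstar β, -1) u),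
   (TRes (dmb β, 1) u, TRes (dstar β, -1) u),
   Flagd β u)

lemma transfer_mem {β : ℝ} {u u' : List ℤ} (hst : stFun β u = stFun β u') (v : List ℤ)
    (hv : (u ++ v) ∈ factorLang (negBetaShift β)) :
    (u' ++ v) ∈ factorLang (negBetaShift β) := by
  obtain ⟨w, ⟨hwB, hwC⟩, nn, hfacuv⟩ := hv
  obtain ⟨y, hy⟩ : ∃ y : ℕ → ℤ, y = fun i : ℕ => w (nn + u.length + i) := ⟨_, rfl⟩
  have hfacu : ∀ i < u.length, u.getD i 0 = w (nn + i) := by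
    intro i hi
    have h1 := hfacuv i (by simp only [List.length_append]; omega)
    rwa [List.getD_append u v 0 i hi] at h1
  have hfacv : ∀ i < v.length, v.getD i 0 = y i := by
    intro i hi
    have h1 := hfacuv (u.length + i) (by simp only [List.length_append]; omega)
    rw [List.getD_append_right u v 0 (u.length + i) (by omega)] at h1
    simp only [Nat.add_sub_cancel_left] at h1
    rw [h1, hy]
    simp only
    congr 1
    push_cast
    ring
  have hP3 : ∀ p : NBSPat, p ∈ patSet β →
      (goodAt p u ↔ goodAt p u') ∧ (tightF p u ↔ tightF p u') ∧ resP p u = resP p u' := by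
    intro p hp
    have h1 := congrFun (congrArg Prod.fst hst) ⟨p, hp⟩
    exact ⟨iff_of_eq (congrArg (fun q => q.1) h1),
      iff_of_eq (congrArg (fun q => q.2.1) h1), congrArg (fun q => q.2.2) h1⟩
  have hAl : (AliveI (dmb β, 1) u ↔ AliveI (dmb β, 1) u') ∧
      (AliveI (dstar β, -1) u ↔ AliveI (dstar β, -1) u') := by
    have h1 := congrArg (fun q => q.2.1) hst
    exact ⟨iff_of_eq (congrArg Prod.fst h1), iff_of_eq (congrArg Prod.snd h1)⟩
  have hTr : TRes (dmb β, 1) u = TRes (dmb β, 1) u' ∧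
      TRes (dstar β, -1) u = TRes (dstar β, -1) u' := by
    have h1 := congrArg (fun q => q.2.2.1) hst
    exact ⟨congrArg Prod.fst h1, congrArg Prod.snd h1⟩
  have hFl : Flagd β u ↔ Flagd β u' := iff_of_eq (congrArg (fun q => q.2.2.2) hst)
  have hwCd : ∀ m : ℤ, CondP (dmb β, 1) (shiftSeq w m) :=
    fun m => (condP_one_iff _ _).mpr (hwC m).1
  have hwCs : ∀ m : ℤ, CondP (dstar β, -1) (shiftSeq w m) :=
    fun m => (condP_neg_iff _ _).mpr (hwC m).2
  -- the new bi-infinite word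
  obtain ⟨W, hW⟩ : ∃ W : ℤ → ℤ, W = nbsGlue w nn u' y := ⟨_, rfl⟩
  have hfacu' : ∀ i < u'.length, u'.getD i 0 = W (nn + i) := by
    intro i hi
    rw [hW, nbsGlue_mid w nn u' y hi]
  have hWy : (fun i : ℕ => W (nn + u'.length + i)) = y := by
    funext i
    rw [hW, nbsGlue_y]
  have hY0 : shiftSeq w (nn + (u.length : ℤ)) = y := by
    rw [show (u.length : ℤ) = ((u.length : ℕ) : ℤ) from rfl,
      shiftSeq_eq_app_len w nn u hfacu, hy]
  have hWY0 : shiftSeq W (nn + (u'.length : ℤ)) = y := by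
    rw [shiftSeq_eq_app_len W nn u' hfacu', hWy]
  -- digit bounds
  have hFlagu : Flagd β u := by
    intro i hi
    rw [hfacu i hi]
    exact hwB _
  have hFlagu' : Flagd β u' := hFl.mp hFlagu
  have hWB : ∀ m : ℤ, 0 ≤ W m ∧ W m ≤ ⌊β⌋ := by
    intro m
    rcases lt_or_ge m nn with h | h
    · rw [hW, nbsGlue_lt _ _ _ _ h]; exact hwB m
    · have ht : m - nn = ((m - nn).toNat : ℤ) := by omega
      rcases lt_or_ge (m - nn).toNat u'.length with h2 | h2
      · have hmt : m = nn + ((m - nn).toNat : ℤ) := by omega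
        rw [hmt, hW, nbsGlue_mid _ _ _ _ h2]
        exact hFlagu' _ h2
      · have hmt2 : m = nn + (u'.length : ℤ) + (((m - nn).toNat - u'.length : ℕ) : ℤ) := by
          omega
        rw [hmt2, hW, nbsGlue_y, hy]
        exact hwB _
  -- the main condition transfer
  have key : ∀ (P₀ : NBSPat), P₀ ∈ patSet β → (∀ m : ℤ, CondP P₀ (shiftSeq w m)) →
      (AliveI P₀ u ↔ AliveI P₀ u') → TRes P₀ u = TRes P₀ u' →
      ∀ m : ℤ, CondP P₀ (shiftSeq W m) := by
    intro P₀ hP₀ hcond hAliff hTreq m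
    have hY : ∀ q ∈ TRes P₀ u, CondP q y := by
      rintro q ⟨j, hj, htight, rfl⟩
      have h1 := hcond (nn + j)
      rw [shiftSeq_eq_app w nn u hfacu (le_of_lt hj), ← hy, condP_nbsApp] at h1
      rcases h1 with hg | ⟨-, hc⟩
      · exact absurd hg (fun hg => not_goodAt_of_tightF htight hg)
      · exact hc
    have hAu : AliveI P₀ u := by
      intro j hj
      have h1 := hcond (nn + j)
      rw [shiftSeq_eq_app w nn u hfacu (le_of_lt hj), ← hy, condP_nbsApp] at h1
      rcases h1 with hg | ⟨hti, -⟩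
      · exact Or.inl hg
      · exact Or.inr hti
    have hFull : ∀ p, p ∈ patSet β → CondP p (nbsApp u y) → CondP p (nbsApp u' y) := by
      intro p hp hc
      obtain ⟨hg, hti, hr⟩ := hP3 p hp
      rw [condP_nbsApp] at hc ⊢
      rcases hc with h1 | ⟨h1, h2⟩
      · exact Or.inl (hg.mp h1)
      · exact Or.inr ⟨hti.mp h1, hr ▸ h2⟩
    rcases lt_or_ge m nn with hm | hm
    · rw [shiftSeq_eq_app_neg W nn u' hfacu' hm, hWy]
      have hwin : winList W m nn = winList w m nn := by
        unfold winList
        refine List.map_congr_left ?_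
        intro a ha
        rw [List.mem_range] at ha
        have haa : m + (a : ℤ) < nn := by
          have := Int.toNat_of_nonneg (by omega : (0:ℤ) ≤ nn - m)
          omega
        rw [hW, nbsGlue_lt _ _ _ _ haa]
      rw [hwin]
      have h1 := hcond m
      rw [shiftSeq_eq_app_neg w nn u hfacu hm, ← hy, condP_nbsApp] at h1
      rw [condP_nbsApp]
      rcases h1 with hg | ⟨hti, hc⟩
      · exact Or.inl hg
      · exact Or.inr ⟨hti, hFull _ (resP_mem_patSet hP₀ _) hc⟩
    · rcases lt_or_ge (m - nn).toNat u'.length with h2 | h2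
      · have hmt : m = nn + (((m - nn).toNat : ℕ) : ℤ) := by omega
        rw [hmt, shiftSeq_eq_app W nn u' hfacu' (le_of_lt h2), hWy, condP_nbsApp]
        rcases (hAliff.mp hAu) _ h2 with hg | htt
        · exact Or.inl hg
        · refine Or.inr ⟨htt, ?_⟩
          have hmem : resP P₀ (u'.drop (m - nn).toNat) ∈ TRes P₀ u' :=
            ⟨(m - nn).toNat, h2, htt, rfl⟩
          rw [← hTreq] at hmem
          exact hY _ hmem
      · have hk : m = (nn + (u'.length : ℤ)) + (((m - nn).toNat - u'.length : ℕ) : ℤ) := by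
          omega
        rw [hk, shiftSeq_add, hWY0]
        have h3 := hcond ((nn + (u.length : ℤ)) + (((m - nn).toNat - u'.length : ℕ) : ℤ))
        rwa [shiftSeq_add, hY0] at h3
  have hWC : ∀ m : ℤ, AltLe (dmb β) (shiftSeq W m) ∧ AltLe (shiftSeq W m) (dstar β) := by
    intro m
    exact ⟨(condP_one_iff _ _).mp (key _ (pd_mem β) hwCd hAl.1 hTr.1 m),
      (condP_neg_iff _ _).mp (key _ (pds_mem β) hwCs hAl.2 hTr.2 m)⟩
  refine ⟨W, ⟨hWB, hWC⟩, nn, ?_⟩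
  intro i hi
  simp only [List.length_append] at hi
  rcases lt_or_ge i u'.length with h2 | h2
  · rw [List.getD_append u' v 0 i h2]
    exact hfacu' i h2
  · rw [List.getD_append_right u' v 0 i h2]
    rw [hfacv _ (by omega)]
    rw [show (nn + (i : ℤ)) = nn + (u'.length : ℤ) + ((i - u'.length : ℕ) : ℤ) from by omega,
      hW, nbsGlue_y]

lemma isRegular_of_finite_quot (L : Language ℤ)
    (h : (Set.range fun u : List ℤ => {v : List ℤ | u ++ v ∈ L}).Finite) : L.IsRegular := by
  classical
  set Q : List ℤ → Language ℤ := fun u => {v | u ++ v ∈ L} with hQ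
  haveI : Fintype ↥(Set.range Q) := h.fintype
  let M : DFA ℤ ↥(Set.range Q) :=
    { step := fun q a => ⟨{v | a :: v ∈ (q : Language ℤ)}, by
        obtain ⟨u, hu⟩ := q.2
        refine ⟨u ++ [a], ?_⟩
        rw [← hu]
        ext v
        show u ++ [a] ++ v ∈ L ↔ a :: v ∈ {v | u ++ v ∈ L}
        rw [List.append_assoc]
        exact Iff.rfl⟩
      start := ⟨Q [], ⟨[], rfl⟩⟩
      accept := {q | [] ∈ (q : Language ℤ)} }
  have heval : ∀ u : List ℤ, ((M.eval u : ↥(Set.range Q)) : Language ℤ) = Q u := by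
    intro u
    induction u using List.reverseRecOn with
    | nil => rfl
    | append_singleton u a ih =>
      rw [DFA.eval_append_singleton]
      show {v | a :: v ∈ ((M.eval u : ↥(Set.range Q)) : Language ℤ)} = Q (u ++ [a])
      rw [ih]
      ext v
      show a :: v ∈ {v | u ++ v ∈ L} ↔ u ++ [a] ++ v ∈ L
      rw [List.append_assoc]
      exact Iff.rfl
  refine ⟨↥(Set.range Q), inferInstance, M, ?_⟩
  ext x
  rw [DFA.mem_accepts]
  show [] ∈ ((M.eval x : ↥(Set.range Q)) : Language ℤ) ↔ x ∈ L
  rw [heval]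
  show x ++ [] ∈ L ↔ x ∈ L
  rw [List.append_nil]

lemma finite_range_comp {α β' γ : Type*} [Nonempty α] (f : α → β') (g : α → γ)
    (hf : (Set.range f).Finite) (hfg : ∀ a b, f a = f b → g a = g b) :
    (Set.range g).Finite := by
  classical
  set h : β' → γ := fun b => if hb : ∃ a', f a' = b then g hb.choose else g (Classical.arbitrary α)
    with hh
  have hsub : Set.range g ⊆ h '' Set.range f := by
    rintro _ ⟨a, rfl⟩
    refine ⟨f a, ⟨a, rfl⟩, ?_⟩
    have hb : ∃ a', f a' = f a := ⟨a, rfl⟩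
    simp only [hh, dif_pos hb]
    exact hfg _ _ hb.choose_spec
  exact (hf.image _).subset hsub

def EvPer (f : ℕ → ℤ) : Prop := ∃ m p : ℕ, 0 < p ∧ ∀ i, m ≤ i → f (i + p) = f i

lemma finite_tails {f : ℕ → ℤ} (h : EvPer f) : (Set.range (nbsTail f)).Finite := by
  obtain ⟨m, p, hp, hper⟩ := h
  have key : ∀ j, ∃ j' < m + p, nbsTail f j = nbsTail f j' := by
    intro j
    induction j using Nat.strong_induction_on with
    | _ j ih =>
      rcases lt_or_ge j (m + p) with h | h
      · exact ⟨j, h, rfl⟩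
      · obtain ⟨j', hj', he⟩ := ih (j - p) (by omega)
        refine ⟨j', hj', ?_⟩
        rw [← he]
        funext i
        simp only [nbsTail]
        rw [show i + j = (i + (j - p)) + p from by omega, hper _ (by omega)]
  have hsub : Set.range (nbsTail f) ⊆ (nbsTail f) '' (Set.Iio (m + p)) := by
    rintro _ ⟨j, rfl⟩
    obtain ⟨j', hj', he⟩ := key j
    exact ⟨j', hj', he.symm⟩
  exact ((Set.finite_Iio _).image _).subset hsub

lemma evPer_dstar {β : ℝ} (hd : EvPer (dmb β)) : EvPer (dstar β) := by
  unfold dstar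
  split_ifs with h
  · refine ⟨0, Nat.find h + 1, Nat.succ_pos _, fun i _ => ?_⟩
    simp only [Nat.add_mod_right]
  · obtain ⟨m, p, hp, hper⟩ := hd
    refine ⟨m + 1, p, hp, fun i hi => ?_⟩
    simp only
    rw [if_neg (by omega), if_neg (by omega),
      show i + p - 1 = (i - 1) + p from by omega, hper (i - 1) (by omega)]

lemma patSet_finite {β : ℝ} (hd : EvPer (dmb β)) (hds : EvPer (dstar β)) :
    (patSet β).Finite := by
  have h1 : patSet β ⊆
      (Set.range (nbsTail (dmb β)) ∪ Set.range (nbsTail (dstar β))) ×ˢ ({1, -1} : Set ℤ) := by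
    rintro ⟨f, ε⟩ ⟨⟨j, hj⟩, hε⟩
    refine ⟨?_, ?_⟩
    · rcases hj with h | h
      · exact Or.inl ⟨j, h.symm⟩
      · exact Or.inr ⟨j, h.symm⟩
    · rcases hε with h | h
      · exact Or.inl h
      · exact Or.inr h
  exact (((finite_tails hd).union (finite_tails hds)).prod
    ((Set.finite_singleton _).insert _)).subset h1

lemma finite_range_stFun {β : ℝ} (hfin : (patSet β).Finite) :
    (Set.range (stFun β)).Finite := by
  haveI := hfin.to_subtype
  have hA : (Set.univ.pi fun _ : (patSet β) =>
      ((Set.univ : Set Prop) ×ˢ (((Set.univ : Set Prop)) ×ˢ patSet β))).Finite :=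
    Set.Finite.pi fun _ => Set.finite_univ.prod (Set.finite_univ.prod hfin)
  have hB : ((Set.univ : Set Prop) ×ˢ (Set.univ : Set Prop)).Finite :=
    Set.finite_univ.prod Set.finite_univ
  have hC : (({t | t ⊆ patSet β} : Set (Set NBSPat)) ×ˢ {t | t ⊆ patSet β}).Finite :=
    hfin.finite_subsets.prod hfin.finite_subsets
  have hD : (Set.univ : Set Prop).Finite := Set.finite_univ
  refine ((hA.prod (hB.prod (hC.prod hD)))).subset ?_
  rintro _ ⟨u, rfl⟩
  refine ⟨?_, ⟨trivial, trivial⟩, ⟨?_, ?_⟩, trivial⟩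
  · intro P _
    exact ⟨trivial, trivial, resP_mem_patSet P.2 u⟩
  · rintro q ⟨j, hj, ht, rfl⟩
    exact resP_mem_patSet (pd_mem β) _
  · rintro q ⟨j, hj, ht, rfl⟩
    exact resP_mem_patSet (pds_mem β) _

open IntermediateField in
set_option maxHeartbeats 2000000 in
lemma evPer_dmb (β : ℝ) (hβ : IsPisot β) : EvPer (dmb β) := by
  classical
  obtain ⟨hβ1, hβint, hβconj⟩ := hβ
  have hβ0 : (0:ℝ) < β + 1 := by linarith
  obtain ⟨c, hc⟩ : ∃ c : ℝ, c = β / (β + 1) := ⟨_, rfl⟩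
  obtain ⟨l, hl⟩ : ∃ l : ℝ, l = -β / (β + 1) := ⟨_, rfl⟩
  have hc0 : 0 < c := by rw [hc]; positivity
  have hc1 : c < 1 := by rw [hc, div_lt_one hβ0]; linarith
  have hlc : l = -c := by rw [hl, hc]; ring
  obtain ⟨x, hx⟩ : ∃ x : ℕ → ℝ, x = fun n => (negBetaT β)^[n] l := ⟨_, rfl⟩
  have hT : ∀ t : ℝ, -c ≤ negBetaT β t ∧ negBetaT β t < 1 - c := by
    intro t
    have he : negBetaT β t = Int.fract (-β * t + c) - c := by
      rw [negBetaT, Int.fract, hc]; ring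
    rw [he]
    have h1 := Int.fract_nonneg (-β * t + c)
    have h2 := Int.fract_lt_one (-β * t + c)
    constructor <;> linarith
  have hxmem : ∀ n, -c ≤ x n ∧ x n < 1 - c := by
    intro n
    cases n with
    | zero =>
      have : x 0 = l := by simp [hx]
      rw [this, hlc]
      constructor
      · linarith
      · linarith
    | succ n =>
      have : x (n + 1) = negBetaT β (x n) := by
        rw [hx]
        exact Function.iterate_succ_apply' _ _ _
      rw [this]
      exact hT _
  have hd_eq : ∀ n, dmb β n = ⌊-β * x n + c⌋ := by
    intro n
    simp only [hx, hc, hl]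
    rfl
  have hD1 : (1:ℤ) ≤ ⌊β⌋ := Int.le_floor.mpr (by exact_mod_cast hβ1.le)
  have hβc1 : β * (1 - c) = c := by rw [hc]; field_simp; ring
  have hβc2 : β * c + c = β := by rw [hc]; field_simp
  have hdig : ∀ n, 0 ≤ dmb β n ∧ dmb β n ≤ ⌊β⌋ := by
    intro n
    obtain ⟨ha, hb⟩ := hxmem n
    constructor
    · rw [hd_eq]
      apply Int.le_floor.mpr
      push_cast
      nlinarith
    · rw [hd_eq]
      apply Int.floor_le_floor
      nlinarith
  have hrec : ∀ n, x (n+1) = -β * x n - dmb β n := by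
    intro n
    have h1 : x (n + 1) = negBetaT β (x n) := by
      rw [hx]
      exact Function.iterate_succ_apply' _ _ _
    rw [h1, hd_eq n, negBetaT, hc]
  -- algebraic setup
  have hβQ : IsIntegral ℚ β := hβint.tower_top
  haveI : FiniteDimensional ℚ ℚ⟮β⟯ := IntermediateField.adjoin.finiteDimensional hβQ
  haveI : NumberField ℚ⟮β⟯ := ⟨⟩
  obtain ⟨b, hb⟩ : ∃ b : ℚ⟮β⟯, b = AdjoinSimple.gen ℚ β := ⟨_, rfl⟩
  have hbmap : algebraMap ℚ⟮β⟯ ℝ b = β := by rw [hb]; exact AdjoinSimple.algebraMap_gen ℚ β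
  have hinj : Function.Injective (algebraMap ℚ⟮β⟯ ℝ) := (algebraMap ℚ⟮β⟯ ℝ).injective
  have hbint : IsIntegral ℤ b := by
    rw [← isIntegral_algebraMap_iff hinj, hbmap]
    exact hβint
  have hb1 : b + 1 ≠ 0 := by
    intro h
    have := congrArg (algebraMap ℚ⟮β⟯ ℝ) h
    rw [map_add, map_one, hbmap, map_zero] at this
    linarith
  obtain ⟨xK, hxK0⟩ : ∃ xK : ℕ → ℚ⟮β⟯, xK = fun n =>
      Nat.rec (-b / (b + 1)) (fun n xn => -b * xn - (dmb β n : ℚ⟮β⟯)) n := ⟨_, rfl⟩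
  have hxKz : xK 0 = -b / (b + 1) := by rw [hxK0]; rfl
  have hxKs : ∀ n, xK (n+1) = -b * xK n - (dmb β n : ℚ⟮β⟯) := by intro n; rw [hxK0]
  have hxKx : ∀ n, algebraMap ℚ⟮β⟯ ℝ (xK n) = x n := by
    intro n
    induction n with
    | zero =>
      rw [hxKz, map_div₀, map_neg, map_add, map_one, hbmap]
      rw [show x 0 = l from by simp [hx], hl]
    | succ n ih =>
      rw [hxKs, map_sub, map_mul, map_neg, hbmap, ih, hrec n]
      norm_num
  obtain ⟨zK, hzK⟩ : ∃ zK : ℕ → ℚ⟮β⟯, zK = fun n => (b + 1) * xK n := ⟨_, rfl⟩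
  have hz0 : zK 0 = -b := by
    rw [hzK]
    simp only [hxKz]
    field_simp
  have hzrec : ∀ n, zK (n+1) = -b * zK n - (b+1) * (dmb β n : ℚ⟮β⟯) := by
    intro n
    rw [hzK]
    simp only [hxKs]
    ring
  have hcastint : ∀ m : ℤ, IsIntegral ℤ ((m : ℚ⟮β⟯)) := by
    intro m
    have : ((m : ℤ) : ℚ⟮β⟯) = algebraMap ℤ ℚ⟮β⟯ m := by
      simp [algebraMap_int_eq]
    rw [this]
    exact isIntegral_algebraMap
  have hzint : ∀ n, IsIntegral ℤ (zK n) := by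
    intro n
    induction n with
    | zero => rw [hz0]; exact hbint.neg
    | succ n ih =>
      rw [hzrec]
      exact ((hbint.neg.mul ih).sub ((hbint.add isIntegral_one).mul (hcastint _)))
  -- conjugate bounds
  have hroot : ∀ φ : ℚ⟮β⟯ →+* ℂ, Polynomial.aeval (φ b) (minpoly ℤ β) = 0 := by
    intro φ
    have h1 : Polynomial.aeval b (minpoly ℤ β) = 0 := by
      apply hinj
      rw [map_zero, ← Polynomial.aeval_algebraMap_apply, hbmap, minpoly.aeval]
    have h3 := Polynomial.aeval_algHom_apply (φ.toIntAlgHom) b (minpoly ℤ β)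
    rw [h1, map_zero] at h3
    exact h3
  have hext : ∀ φ : ℚ⟮β⟯ →+* ℂ, φ b = (β:ℂ) →
      ∀ v, φ v = Complex.ofRealHom (algebraMap ℚ⟮β⟯ ℝ v) := by
    intro φ hφ
    have hfg : φ.toRatAlgHom = (Complex.ofRealHom.comp (algebraMap ℚ⟮β⟯ ℝ)).toRatAlgHom := by
      apply (IntermediateField.adjoin.powerBasis hβQ).algHom_ext
      rw [IntermediateField.adjoin.powerBasis_gen, ← hb]
      show φ b = (Complex.ofRealHom.comp (algebraMap ℚ⟮β⟯ ℝ)) b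
      rw [hφ, RingHom.comp_apply, hbmap]
      rfl
    intro v
    exact congrArg (fun (f : ℚ⟮β⟯ →ₐ[ℚ] ℂ) => f v) hfg
  obtain ⟨D, hD⟩ : ∃ D : ℝ, D = (⌊β⌋ : ℝ) := ⟨_, rfl⟩
  have hD1' : 1 ≤ D := by rw [hD]; exact_mod_cast hD1
  have habs : ∀ n, |((dmb β n : ℤ) : ℝ)| ≤ D := by
    intro n
    obtain ⟨h1, h2⟩ := hdig n
    rw [hD, abs_le]
    constructor <;> [skip; skip] <;> exact_mod_cast by omega
  have hbd : ∀ (φ : ℚ⟮β⟯ →+* ℂ), ‖φ b‖ < 1 → ∀ n, ‖φ (zK n)‖ ≤ 2*D/(1-‖φ b‖) := by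
    intro φ ht n
    have ht0 : (0:ℝ) ≤ ‖φ b‖ := norm_nonneg _
    have htpos : 0 < 1 - ‖φ b‖ := by linarith
    have hCeq : (1 - ‖φ b‖) * (2*D/(1-‖φ b‖)) = 2*D := by
      rw [mul_comm]
      exact div_mul_cancel₀ _ htpos.ne'
    have hCge : 2*D ≤ 2*D/(1-‖φ b‖) := by
      rw [le_div_iff₀ htpos]
      nlinarith
    induction n with
    | zero =>
      rw [hz0, map_neg, norm_neg]
      linarith
    | succ n ih =>
      rw [hzrec, map_sub, map_mul, map_mul]
      have e1 : ‖φ (-b)‖ = ‖φ b‖ := by rw [map_neg, norm_neg]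
      have e2 : ‖φ (b+1)‖ ≤ ‖φ b‖ + 1 := by
        rw [map_add, map_one]
        exact (norm_add_le _ _).trans (by rw [norm_one])
      have e3 : ‖φ ((dmb β n : ℚ⟮β⟯))‖ ≤ D := by
        rw [map_intCast, Complex.norm_intCast]
        exact habs n
      calc ‖φ (-b) * φ (zK n) - φ (b+1) * φ ((dmb β n : ℚ⟮β⟯))‖
          ≤ ‖φ (-b) * φ (zK n)‖ + ‖φ (b+1) * φ ((dmb β n : ℚ⟮β⟯))‖ := norm_sub_le _ _
        _ = ‖φ (-b)‖ * ‖φ (zK n)‖ + ‖φ (b+1)‖ * ‖φ ((dmb β n : ℚ⟮β⟯))‖ := by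
            rw [norm_mul, norm_mul]
        _ ≤ 2*D/(1-‖φ b‖) := by
            rw [e1]
            nlinarith [norm_nonneg (φ (zK n)), norm_nonneg (φ ((dmb β n : ℚ⟮β⟯)))]
  haveI : Fintype (ℚ⟮β⟯ →+* ℂ) := inferInstance
  obtain ⟨B0, hB0⟩ : ∃ B0 : ℝ, ∀ φ : ℚ⟮β⟯ →+* ℂ,
      (if ‖φ b‖ < 1 then 2*D/(1-‖φ b‖) else 0) ≤ B0 := Finite.exists_le _
  obtain ⟨B, hB⟩ : ∃ B : ℝ, B = max (β + 1) B0 := ⟨_, rfl⟩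
  have hBall : ∀ n, ∀ φ : ℚ⟮β⟯ →+* ℂ, ‖φ (zK n)‖ ≤ B := by
    intro n φ
    by_cases hφ : φ b = (β:ℂ)
    · rw [hext φ hφ (zK n)]
      have e4 : ‖(Complex.ofRealHom (algebraMap ℚ⟮β⟯ ℝ (zK n)))‖ = |algebraMap ℚ⟮β⟯ ℝ (zK n)| := by
        rw [show (Complex.ofRealHom (algebraMap ℚ⟮β⟯ ℝ (zK n))) = ((algebraMap ℚ⟮β⟯ ℝ (zK n) : ℝ) : ℂ) from rfl,
          Complex.norm_real, Real.norm_eq_abs]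
      rw [e4]
      have e5 : algebraMap ℚ⟮β⟯ ℝ (zK n) = (β + 1) * x n := by
        rw [hzK]
        simp only
        rw [map_mul, map_add, map_one, hbmap, hxKx]
      rw [e5]
      obtain ⟨h6, h7⟩ := hxmem n
      have e6 : |(β + 1) * x n| ≤ (β + 1) * 1 := by
        rw [abs_mul, abs_of_pos hβ0]
        apply mul_le_mul_of_nonneg_left _ (le_of_lt hβ0)
        rw [abs_le]
        constructor <;> linarith
      rw [hB]
      have := le_max_left (β + 1) B0
      linarith
    · have hlt : ‖φ b‖ < 1 := by
        exact hβconj (φ b) (hroot φ) hφ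
      refine le_trans (hbd φ hlt n) ?_
      rw [hB]
      refine le_trans ?_ (le_max_right _ _)
      have h8 := hB0 φ
      rwa [if_pos hlt] at h8
  have hzfin : (Set.range zK).Finite := by
    apply Set.Finite.subset (NumberField.Embeddings.finite_of_norm_le ℚ⟮β⟯ ℂ B)
    rintro _ ⟨n, rfl⟩
    exact ⟨hzint n, fun φ => hBall n φ⟩
  have hxKfin : (Set.range xK).Finite := by
    refine ((hzfin.image (fun z => z / (b+1)))).subset ?_
    rintro _ ⟨n, rfl⟩
    refine ⟨zK n, ⟨n, rfl⟩, ?_⟩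
    rw [hzK]
    simp only
    field_simp
  have hxfin : (Set.range x).Finite := by
    refine (hxKfin.image (algebraMap ℚ⟮β⟯ ℝ)).subset ?_
    rintro _ ⟨n, rfl⟩
    exact ⟨xK n, ⟨n, rfl⟩, hxKx n⟩
  have hninj : ¬ Function.Injective x := fun hinj' =>
    (Set.infinite_range_of_injective hinj') hxfin
  obtain ⟨a1, a2, heq, hne'⟩ := Function.not_injective_iff.mp hninj
  have main : ∀ a bb : ℕ, a < bb → x a = x bb → EvPer (dmb β) := by
    intro a bb hab hxe
    refine ⟨a, bb - a, by omega, fun i hi => ?_⟩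
    have hxper : ∀ k, x (a + k) = x (bb + k) := by
      intro k
      have e7 : ∀ m : ℕ, x m = (negBetaT β)^[m] l := fun m => by rw [hx]
      rw [e7, e7, add_comm a k, add_comm bb k,
        Function.iterate_add_apply, Function.iterate_add_apply, ← e7, ← e7, hxe]
    have h1 : x (i + (bb - a)) = x i := by
      have h9 := hxper (i - a)
      rw [show a + (i - a) = i from by omega, show bb + (i - a) = i + (bb - a) from by omega] at h9
      exact h9.symm
    rw [hd_eq, hd_eq, h1]
  rcases Nat.lt_or_gt_of_ne hne' with hlt | hlt
  · exact main _ _ hlt heq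
  · exact main _ _ hlt heq.symm



/-- If `β` is a Pisot number, then the (-β)-shift is a sofic system: its language of
finite factors is regular. -/
theorem negBetaShift_sofic_of_pisot (β : ℝ) (hβ : IsPisot β) :
    (factorLang (negBetaShift β)).IsRegular := by
  have hd : EvPer (dmb β) := evPer_dmb β hβ
  have hfin : (patSet β).Finite := patSet_finite hd (evPer_dstar hd)
  apply isRegular_of_finite_quot
  apply finite_range_comp (stFun β) _ (finite_range_stFun hfin)
  intro a b hab
  ext v
  exact ⟨fun hv => transfer_mem hab v hv, fun hv => transfer_mem hab.symm v hv⟩
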